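/- For any partition λ and parameters a, q, the ratio s_λ(t(a,q)) / s_λ(t(∞,q)) equals the q-content product (q^a;q)_λ = ∏_{(i,j)∈λ} (1 - q^{a+j-i}). -/

import Mathlib

/-- The conjugate (transpose) partition: `λ'_j = #{i ≥ 1 | λ_i ≥ j}`. -/
noncomputable def conjP (p : ℕ → ℕ) (j : ℕ) : ℕ := Nat.card {i : ℕ | 1 ≤ i ∧ j ≤ p i}

/-- The number of diagonal nodes of the Young diagram, i.e. the Frobenius rank `r`. -/
noncomputable def frobRank (p : ℕ → ℕ) : ℕ := Nat.card {i : ℕ | 1 ≤ i ∧ i ≤ p i}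

/-- `p` (indexed from 1) is a partition: weakly decreasing, finitely many nonzero parts. -/
def IsPartition (p : ℕ → ℕ) : Prop :=
  (∀ i j, 1 ≤ i → i ≤ j → p j ≤ p i) ∧ (∃ N, ∀ i, N < i → p i = 0)
/-- The Schur function `s_λ(t) = det(h_{λ_i-i+j}(t))_{1≤i,j≤L}` evaluated through the
values `h k` of the complete symmetric functions at the given times (`h_k = 0` for
`k < 0`); `L` is (an upper bound for) the number of parts of `λ`. -/
noncomputable def schurDet (h : ℕ → ℂ) (p : ℕ → ℕ) (L : ℕ) : ℂ :=
  Matrix.det (Matrix.of fun i j : Fin L =>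
    if ((p (i.1 + 1) : ℤ) + j.1 - i.1) < 0 then 0
    else h ((p (i.1 + 1) : ℤ) + j.1 - i.1).toNat)

/-- The q-Pochhammer product `(b;q)_n = (1-b)(1-bq)⋯(1-bq^{n-1})`. -/
noncomputable def qPoch (b q : ℂ) (n : ℕ) : ℂ := ∏ l ∈ Finset.range n, (1 - b * q ^ l)



open Finset Polynomial

namespace SchurAux

variable {R : Type*} [CommRing R]

/-- generalized q-Pochhammer -/
def qP (b q : R) (n : ℕ) : R := ∏ l ∈ Finset.range n, (1 - b * q ^ l)

@[simp] lemma qP_zero_left (q : R) (n : ℕ) : qP 0 q n = 1 := by simp [qP]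

lemma qP_map {S : Type*} [CommRing S] (f : R →+* S) (b q : R) (n : ℕ) :
    qP (f b) (f q) n = f (qP b q n) := by
  simp [qP, map_prod]

section FieldFacts
variable {F : Type*} [Field F]

lemma qPqq_ne_zero {q : F} (hqm : ∀ m : ℕ, 1 ≤ m → q ^ m ≠ 1) (n : ℕ) :
    qP q q n ≠ 0 := by
  refine Finset.prod_ne_zero_iff.2 fun l _ => ?_
  have h : q * q ^ l = q ^ (l + 1) := by ring
  rw [h]
  exact sub_ne_zero.2 fun he => hqm (l + 1) (by omega) he.symm

lemma helper1 {q : F} (hq : q ≠ 0) (M s : ℕ) :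
    (1 : F) - q ^ ((M : ℤ) - (s : ℕ)) = (-(q ^ (-(s : ℤ)))) * (q ^ M + -(q ^ s)) := by
  have h3 : (q : F) ^ ((M : ℤ) - (s : ℕ)) = q ^ M * q ^ (-(s : ℤ)) := by
    rw [sub_eq_add_neg, zpow_add₀ hq, zpow_natCast]
  have h4 : (q : F) ^ s * q ^ (-(s : ℤ)) = 1 := by
    rw [← zpow_natCast q s, ← zpow_add₀ hq]; simp
  rw [h3]; linear_combination -h4

lemma helper2 {q Q : F} (hq : q ≠ 0) (hQ0 : Q ≠ 0) (M s : ℕ) :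
    (1 : F) - Q * q ^ ((M : ℤ) - (s : ℕ)) =
      (-(Q * q ^ (-(s : ℤ)))) * (q ^ M + -(Q⁻¹ * q ^ s)) := by
  have h3 : (q : F) ^ ((M : ℤ) - (s : ℕ)) = q ^ M * q ^ (-(s : ℤ)) := by
    rw [sub_eq_add_neg, zpow_add₀ hq, zpow_natCast]
  have h4 : (q : F) ^ s * q ^ (-(s : ℤ)) = 1 := by
    rw [← zpow_natCast q s, ← zpow_add₀ hq]; simp
  have h5 : Q * Q⁻¹ = 1 := mul_inv_cancel₀ hQ0
  have h6 : Q * Q⁻¹ * (q ^ s * q ^ (-(s : ℤ))) = 1 := by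
    rw [h4, mul_inv_cancel₀ hQ0]; simp
  rw [h3]; linear_combination -h6

end FieldFacts

/-- L0: determinant with polynomial columns of triangular degrees. -/
lemma det_eval_poly (n : ℕ) (x : Fin n → R) (f : Fin n → R[X])
    (hdeg : ∀ j : Fin n, (f j).natDegree ≤ n - 1 - j.1) :
    Matrix.det (Matrix.of fun i j : Fin n => (f j).eval (x i)) =
      (∏ j : Fin n, (f j).coeff (n - 1 - j.1)) *
        Matrix.det (Matrix.of fun i j : Fin n => x i ^ (n - 1 - j.1)) := by
  rcases Nat.eq_zero_or_pos n with h0 | hn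
  · subst h0
    simp [Matrix.det_isEmpty]
  · have key : (Matrix.of fun i j : Fin n => (f j).eval (x i)) =
        (Matrix.of fun i k : Fin n => x i ^ (n - 1 - k.1)) *
          (Matrix.of fun k j : Fin n => (f j).coeff (n - 1 - k.1)) := by
      ext i j
      simp only [Matrix.mul_apply, Matrix.of_apply]
      rw [Polynomial.eval_eq_sum_range' (n := n) (lt_of_le_of_lt (hdeg j) (by omega)) (x i)]
      rw [← Finset.sum_range_reflect]
      rw [← Fin.sum_univ_eq_sum_range
        (fun k => (f j).coeff (n - 1 - k) * x i ^ (n - 1 - k)) n]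
      exact Finset.sum_congr rfl fun k _ => by ring
    have hU : (Matrix.of fun k j : Fin n => (f j).coeff (n - 1 - k.1)).det
        = ∏ j : Fin n, (f j).coeff (n - 1 - j.1) := by
      rw [Matrix.det_of_lowerTriangular]
      · rfl
      · intro a b hab
        have hab' : (a : ℕ) < (b : ℕ) := hab
        have hb : (b : ℕ) < n := b.2
        simp only [Matrix.of_apply]
        exact Polynomial.coeff_eq_zero_of_natDegree_lt (by have := hdeg b; omega)
    rw [key, Matrix.det_mul, hU]
    ring

end SchurAux
namespace SchurAux

variable {R : Type*} [CommRing R]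

open Finset Polynomial

/-- evaluation of the "descending products" determinant -/
lemma detG [Nontrivial R] (n : ℕ) (x a : ℕ → R) :
    Matrix.det (Matrix.of fun i j : Fin n =>
        ∏ k ∈ Finset.Ico (j : ℕ) (n - 1), (x i + a k)) =
      Matrix.det (Matrix.of fun i j : Fin n => x (i : ℕ) ^ (n - 1 - (j : ℕ))) := by
  have h := det_eval_poly n (fun i => x (i : ℕ))
    (fun j => ∏ k ∈ Finset.Ico (j : ℕ) (n - 1), (Polynomial.X + Polynomial.C (a k)))
    (fun j => by
      refine le_trans (Polynomial.natDegree_prod_le _ _) ?_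
      have : ∀ k ∈ Finset.Ico (j : ℕ) (n - 1),
          (Polynomial.X + Polynomial.C (a k)).natDegree = 1 := fun k _ =>
        Polynomial.natDegree_X_add_C (a k)
      rw [Finset.sum_congr rfl this, Finset.sum_const, Nat.card_Ico, smul_eq_mul, mul_one])
  have hmon : ∀ j : Fin n,
      (∏ k ∈ Finset.Ico (j : ℕ) (n - 1), (Polynomial.X + Polynomial.C (a k))).Monic :=
    fun j => Polynomial.monic_prod_of_monic _ _ fun k _ => Polynomial.monic_X_add_C (a k)
  have hdeg : ∀ j : Fin n,
      (∏ k ∈ Finset.Ico (j : ℕ) (n - 1), (Polynomial.X + Polynomial.C (a k))).natDegree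
        = n - 1 - (j : ℕ) := by
    intro j
    rw [Polynomial.natDegree_prod_of_monic _ _ fun k _ => Polynomial.monic_X_add_C (a k)]
    have : ∀ k ∈ Finset.Ico (j : ℕ) (n - 1),
        (Polynomial.X + Polynomial.C (a k)).natDegree = 1 := fun k _ =>
      Polynomial.natDegree_X_add_C (a k)
    rw [Finset.sum_congr rfl this, Finset.sum_const, Nat.card_Ico, smul_eq_mul, mul_one]
  have hcoef : ∀ j : Fin n,
      (∏ k ∈ Finset.Ico (j : ℕ) (n - 1), (Polynomial.X + Polynomial.C (a k))).coeff
        (n - 1 - (j : ℕ)) = 1 := by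
    intro j
    rw [← hdeg j]
    exact (hmon j).coeff_natDegree
  have heval : (Matrix.of fun i j : Fin n =>
      Polynomial.eval (x (i : ℕ))
        (∏ k ∈ Finset.Ico (j : ℕ) (n - 1), (Polynomial.X + Polynomial.C (a k)))) =
      (Matrix.of fun i j : Fin n => ∏ k ∈ Finset.Ico (j : ℕ) (n - 1), (x (i : ℕ) + a k)) := by
    ext i j
    simp [Polynomial.eval_prod]
  rw [heval] at h
  rw [h, Finset.prod_congr rfl fun j _ => hcoef j, Finset.prod_const_one, one_mul]

/-- the Krattenthaler working matrix -/
def kM (n : ℕ) (x a b : ℕ → R) (r : ℕ) : Matrix (Fin n) (Fin n) R :=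
  Matrix.of fun i j =>
    (∏ k ∈ Finset.Ico (j : ℕ) (n - 1), (x (i : ℕ) + a k)) *
      ∏ k ∈ Finset.range ((j : ℕ) - r), (x (i : ℕ) + b k)

lemma kratt_step (n : ℕ) (x a b : ℕ → R) (r : ℕ) (hr : r < n - 1) :
    (kM n x a b r).det =
      (∏ k ∈ Finset.Ico r (n - 1), (b (k - r) - a k)) * (kM n x a b (r + 1)).det := by
  classical
  set T : Matrix (Fin n) (Fin n) R := Matrix.of fun k j =>
    if (k : ℕ) = (j : ℕ) then (1 : R)
    else if (k : ℕ) + 1 = (j : ℕ) ∧ r < (j : ℕ) then (-1 : R) else 0 with hT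
  have hTdet : T.det = 1 := by
    rw [Matrix.det_of_upperTriangular]
    · simp only [hT, Matrix.of_apply, if_pos rfl]
      exact Finset.prod_const_one
    · intro i j hij
      have hij' : (j : ℕ) < (i : ℕ) := hij
      simp only [hT, Matrix.of_apply]
      rw [if_neg (by omega), if_neg (by omega)]
  have hmul : kM n x a b r * T = Matrix.of fun i j : Fin n =>
      (if r < (j : ℕ) then (b ((j : ℕ) - 1 - r) - a ((j : ℕ) - 1)) else 1) *
        kM n x a b (r + 1) i j := by
    ext i j
    simp only [Matrix.mul_apply]
    have hsplit : ∀ k : Fin n, kM n x a b r i k * T k j =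
        (if k = j then kM n x a b r i k else 0) +
          (if (k : ℕ) + 1 = (j : ℕ) ∧ r < (j : ℕ) then -(kM n x a b r i k) else 0) := by
      intro k
      by_cases h1 : (k : ℕ) = (j : ℕ)
      · have hkj : k = j := Fin.ext h1
        subst hkj
        simp only [hT, Matrix.of_apply, eq_self_iff_true, if_true]
        rw [if_neg (show ¬((k : ℕ) + 1 = (k : ℕ) ∧ r < (k : ℕ)) by rintro ⟨h, -⟩; omega),
          mul_one, add_zero]
      · have hkj : ¬ k = j := fun he => h1 (by rw [he])
        by_cases h2 : (k : ℕ) + 1 = (j : ℕ) ∧ r < (j : ℕ)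
        · simp only [hT, Matrix.of_apply, if_neg h1, if_pos h2, if_neg hkj]
          ring
        · simp only [hT, Matrix.of_apply, if_neg h1, if_neg h2, if_neg hkj, mul_zero, zero_add]
    rw [Finset.sum_congr rfl fun k _ => hsplit k, Finset.sum_add_distrib]
    rw [Finset.sum_ite_eq' Finset.univ j (fun k => kM n x a b r i k), if_pos (Finset.mem_univ j)]
    by_cases hrj : r < (j : ℕ)
    · have hj1 : 1 ≤ (j : ℕ) := by omega
      set k0 : Fin n := ⟨(j : ℕ) - 1, by have := j.2; omega⟩ with hk0
      have hsum2 : (∑ k : Fin n, if (k : ℕ) + 1 = (j : ℕ) ∧ r < (j : ℕ)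
          then -(kM n x a b r i k) else 0) = -(kM n x a b r i k0) := by
        rw [Finset.sum_eq_single k0]
        · rw [if_pos ⟨by show (j : ℕ) - 1 + 1 = (j : ℕ); omega, hrj⟩]
        · intro k _ hk
          rw [if_neg]
          intro h1
          rcases h1 with ⟨h1a, -⟩
          exact hk (Fin.ext (by show (k : ℕ) = (j : ℕ) - 1; omega))
        · intro h; exact absurd (Finset.mem_univ k0) h
      rw [hsum2]
      -- now kM r i j - kM r i k0 = (b (j-1-r) - a (j-1)) * kM (r+1) i j
      have hk0v : (k0 : ℕ) = (j : ℕ) - 1 := rfl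
      have hjn : (j : ℕ) < n := j.2
      have e1 : kM n x a b r i j =
          ((∏ k ∈ Finset.Ico (j : ℕ) (n - 1), (x (i : ℕ) + a k)) *
            ∏ k ∈ Finset.range ((j : ℕ) - 1 - r), (x (i : ℕ) + b k)) *
            (x (i : ℕ) + b ((j : ℕ) - 1 - r)) := by
        show (∏ k ∈ Finset.Ico (j : ℕ) (n - 1), (x (i : ℕ) + a k)) *
            (∏ k ∈ Finset.range ((j : ℕ) - r), (x (i : ℕ) + b k)) = _
        rw [show (j : ℕ) - r = ((j : ℕ) - 1 - r) + 1 by omega, Finset.prod_range_succ]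
        ring
      have e2 : kM n x a b r i k0 =
          ((∏ k ∈ Finset.Ico (j : ℕ) (n - 1), (x (i : ℕ) + a k)) *
            ∏ k ∈ Finset.range ((j : ℕ) - 1 - r), (x (i : ℕ) + b k)) *
            (x (i : ℕ) + a ((j : ℕ) - 1)) := by
        show (∏ k ∈ Finset.Ico ((k0 : ℕ)) (n - 1), (x (i : ℕ) + a k)) *
            (∏ k ∈ Finset.range ((k0 : ℕ) - r), (x (i : ℕ) + b k)) = _
        rw [hk0v, show (j : ℕ) - 1 - r = (j:ℕ) - 1 - r from rfl]
        rw [Finset.prod_eq_prod_Ico_succ_bot (by omega : (j : ℕ) - 1 < n - 1)]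
        rw [show (j : ℕ) - 1 + 1 = (j : ℕ) by omega]
        ring
      have e3 : kM n x a b (r + 1) i j =
          (∏ k ∈ Finset.Ico (j : ℕ) (n - 1), (x (i : ℕ) + a k)) *
            ∏ k ∈ Finset.range ((j : ℕ) - 1 - r), (x (i : ℕ) + b k) := by
        show (∏ k ∈ Finset.Ico (j : ℕ) (n - 1), (x (i : ℕ) + a k)) *
            (∏ k ∈ Finset.range ((j : ℕ) - (r + 1)), (x (i : ℕ) + b k)) = _
        rw [show (j : ℕ) - (r + 1) = (j : ℕ) - 1 - r by omega]
      rw [Matrix.of_apply, if_pos hrj, e1, e2, e3]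
      ring
    · have hsum2 : (∑ k : Fin n, if (k : ℕ) + 1 = (j : ℕ) ∧ r < (j : ℕ)
          then -(kM n x a b r i k) else 0) = 0 := by
        refine Finset.sum_eq_zero fun k _ => if_neg ?_
        rintro ⟨-, h2⟩; exact hrj h2
      rw [hsum2, Matrix.of_apply, if_neg hrj]
      have : kM n x a b r i j = kM n x a b (r + 1) i j := by
        show (∏ k ∈ Finset.Ico (j : ℕ) (n - 1), (x (i : ℕ) + a k)) *
            (∏ k ∈ Finset.range ((j : ℕ) - r), (x (i : ℕ) + b k)) =
          (∏ k ∈ Finset.Ico (j : ℕ) (n - 1), (x (i : ℕ) + a k)) *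
            (∏ k ∈ Finset.range ((j : ℕ) - (r + 1)), (x (i : ℕ) + b k))
        rw [show (j : ℕ) - r = 0 by omega, show (j : ℕ) - (r + 1) = 0 by omega]
      rw [this, one_mul, add_zero]
  have hdet1 : (kM n x a b r).det = (kM n x a b r * T).det := by
    rw [Matrix.det_mul, hTdet, mul_one]
  rw [hdet1, hmul, Matrix.det_mul_row]
  congr 1
  rw [Fin.prod_univ_eq_prod_range (fun j => if r < j then (b (j - 1 - r) - a (j - 1)) else 1) n]
  rw [← Finset.prod_filter]
  have hfil : (Finset.range n).filter (fun j => r < j) = Finset.Ico (r + 1) n := by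
    ext t
    simp only [Finset.mem_filter, Finset.mem_range, Finset.mem_Ico]
    omega
  rw [hfil, Finset.prod_Ico_eq_prod_range, Finset.prod_Ico_eq_prod_range]
  rw [show n - (r + 1) = n - 1 - r by omega]
  refine (Finset.prod_congr rfl fun s hs => ?_).symm
  rw [show r + 1 + s - 1 - r = s by omega, show r + 1 + s - 1 = r + s by omega,
    show r + s - r = s by omega]

end SchurAux
namespace SchurAux

variable {R : Type*} [CommRing R]

open Finset Polynomial

lemma kratt_aux (n : ℕ) (x a b : ℕ → R) :
    ∀ d r : ℕ, n - 1 ≤ r + d →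
      (kM n x a b r).det =
        (∏ k ∈ Finset.Ico r (n - 1), ∏ l ∈ Finset.range (k - r + 1), (b l - a k)) *
          (kM n x a b (n - 1)).det := by
  intro d
  induction d with
  | zero =>
    intro r hrd
    have h1 : Finset.Ico r (n - 1) = ∅ := Finset.Ico_eq_empty (by omega)
    have h2 : kM n x a b r = kM n x a b (n - 1) := by
      ext i j
      show (∏ k ∈ Finset.Ico (j : ℕ) (n - 1), (x (i : ℕ) + a k)) *
          (∏ k ∈ Finset.range ((j : ℕ) - r), (x (i : ℕ) + b k)) =
        (∏ k ∈ Finset.Ico (j : ℕ) (n - 1), (x (i : ℕ) + a k)) *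
          (∏ k ∈ Finset.range ((j : ℕ) - (n - 1)), (x (i : ℕ) + b k))
      have hj : (j : ℕ) < n := j.2
      rw [show (j : ℕ) - r = 0 by omega, show (j : ℕ) - (n - 1) = 0 by omega]
    rw [h1, h2, Finset.prod_empty, one_mul]
  | succ d ih =>
    intro r hrd
    by_cases hr : n - 1 ≤ r
    · have h1 : Finset.Ico r (n - 1) = ∅ := Finset.Ico_eq_empty (by omega)
      have h2 : kM n x a b r = kM n x a b (n - 1) := by
        ext i j
        show (∏ k ∈ Finset.Ico (j : ℕ) (n - 1), (x (i : ℕ) + a k)) *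
            (∏ k ∈ Finset.range ((j : ℕ) - r), (x (i : ℕ) + b k)) =
          (∏ k ∈ Finset.Ico (j : ℕ) (n - 1), (x (i : ℕ) + a k)) *
            (∏ k ∈ Finset.range ((j : ℕ) - (n - 1)), (x (i : ℕ) + b k))
        have hj : (j : ℕ) < n := j.2
        rw [show (j : ℕ) - r = 0 by omega, show (j : ℕ) - (n - 1) = 0 by omega]
      rw [h1, h2, Finset.prod_empty, one_mul]
    · push_neg at hr
      rw [kratt_step n x a b r hr, ih (r + 1) (by omega)]
      rw [← mul_assoc]
      congr 1
      rw [Finset.prod_eq_prod_Ico_succ_bot hr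
        (fun k => ∏ l ∈ Finset.range (k - r + 1), (b l - a k))]
      rw [Finset.prod_eq_prod_Ico_succ_bot hr (fun k => b (k - r) - a k)]
      simp only [Nat.sub_self, zero_add, Finset.prod_range_one]
      rw [mul_assoc]
      congr 1
      rw [← Finset.prod_mul_distrib]
      refine Finset.prod_congr rfl fun k hk => ?_
      have hk' : r + 1 ≤ k := (Finset.mem_Ico.1 hk).1
      rw [show k - (r + 1) + 1 = k - r by omega, Finset.prod_range_succ]
      ring

lemma kratt [Nontrivial R] (n : ℕ) (x a b : ℕ → R) :
    (kM n x a b 0).det =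
      (∏ k ∈ Finset.range (n - 1), ∏ l ∈ Finset.range (k + 1), (b l - a k)) *
        Matrix.det (Matrix.of fun i j : Fin n => x (i : ℕ) ^ (n - 1 - (j : ℕ))) := by
  rw [kratt_aux n x a b (n - 1) 0 (by omega)]
  have h1 : kM n x a b (n - 1) = Matrix.of fun i j : Fin n =>
      ∏ k ∈ Finset.Ico (j : ℕ) (n - 1), (x (i : ℕ) + a k) := by
    ext i j
    show (∏ k ∈ Finset.Ico (j : ℕ) (n - 1), (x (i : ℕ) + a k)) *
        (∏ k ∈ Finset.range ((j : ℕ) - (n - 1)), (x (i : ℕ) + b k)) = _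
    have hj : (j : ℕ) < n := j.2
    rw [show (j : ℕ) - (n - 1) = 0 by omega, Finset.prod_range_zero, mul_one]
    rfl
  rw [h1, detG]
  congr 1
  rw [Nat.Ico_zero_eq_range]
  exact Finset.prod_congr rfl fun k _ => by rw [Nat.sub_zero]

end SchurAux
namespace SchurAux

open Finset

variable {F : Type*} [Field F]

/-- `m_i = λ_{i+1} + L - 1 - i` (0-based). -/
def mext (p : ℕ → ℕ) (L : ℕ) (i : ℕ) : ℕ := p (i + 1) + (L - 1 - i)

/-- the matrix of the Jacobi-Trudi determinant at the (a,q)-specialization -/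
noncomputable def Ament (q Q : F) (p : ℕ → ℕ) (L : ℕ) : Matrix (Fin L) (Fin L) F :=
  Matrix.of fun i j =>
    if ((p (i.1 + 1) : ℤ) + j.1 - i.1) < 0 then 0
    else (qP q q ((p (i.1 + 1) : ℤ) + j.1 - i.1).toNat)⁻¹ *
      qP Q q ((p (i.1 + 1) : ℤ) + j.1 - i.1).toNat

lemma entry_key {q Q : F} (hq : q ≠ 0) (hqm : ∀ m : ℕ, 1 ≤ m → q ^ m ≠ 1)
    (p : ℕ → ℕ) (L : ℕ) (i j : Fin L) :
    (qP q q (mext p L i.1) * ∏ t ∈ Ico 1 L, (1 - Q * q ^ ((mext p L i.1 : ℤ) - t))) *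
      Ament q Q p L i j =
    qP Q q (mext p L i.1) *
      ((∏ k ∈ Ico j.1 (L - 1), (1 - q ^ ((mext p L i.1 : ℤ) - ((L - 2 - k : ℕ) : ℤ)))) *
        ∏ k ∈ range j.1, (1 - Q * q ^ ((mext p L i.1 : ℤ) - ((L - 1 - k : ℕ) : ℤ)))) := by
  have hiL : i.1 < L := i.2
  have hjL : j.1 < L := j.2
  set Mi := mext p L i.1 with hMidef
  have hMi : (Mi : ℤ) = (p (i.1 + 1) : ℤ) + (L : ℤ) - 1 - i.1 := by
    simp only [hMidef, mext]; push_cast; omega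
  by_cases hneg : ((p (i.1 + 1) : ℤ) + j.1 - i.1) < 0
  · have hA : Ament q Q p L i j = 0 := by
      simp only [Ament, Matrix.of_apply, if_pos hneg]
    have hbound : (Mi : ℤ) + j.1 < (L : ℤ) - 1 := by omega
    have hmem : L - 2 - Mi ∈ Ico j.1 (L - 1) := by
      simp only [mem_Ico]; omega
    have hzero : (1 : F) - q ^ ((Mi : ℤ) - ((L - 2 - (L - 2 - Mi) : ℕ) : ℤ)) = 0 := by
      rw [show ((L - 2 - (L - 2 - Mi) : ℕ) : ℤ) = (Mi : ℤ) by omega]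
      simp
    rw [hA, mul_zero, Finset.prod_eq_zero hmem hzero, zero_mul, mul_zero]
  · push_neg at hneg
    set nij := ((p (i.1 + 1) : ℤ) + j.1 - i.1) with hnij
    set N := nij.toNat with hNdef
    have hN : (N : ℤ) = nij := Int.toNat_of_nonneg hneg
    have hNMi : N ≤ Mi := by omega
    have hdiff : Mi - N = L - 1 - j.1 := by omega
    have hA : Ament q Q p L i j = (qP q q N)⁻¹ * qP Q q N := by
      simp only [Ament, Matrix.of_apply, ← hnij, if_neg (not_lt.2 hneg), ← hNdef]
    -- (a) splitting of (q;q)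
    have ha : qP q q N * (∏ l ∈ Ico N Mi, (1 - q * q ^ l)) = qP q q Mi :=
      Finset.prod_range_mul_prod_Ico _ hNMi
    have haP : (∏ l ∈ Ico N Mi, (1 - q * q ^ l)) =
        ∏ k ∈ Ico j.1 (L - 1), (1 - q ^ ((Mi : ℤ) - ((L - 2 - k : ℕ) : ℤ))) := by
      rw [Finset.prod_Ico_eq_prod_range, Finset.prod_Ico_eq_prod_range]
      rw [hdiff]
      refine Finset.prod_congr rfl fun s hs => ?_
      have hs' : s < L - 1 - j.1 := mem_range.1 hs
      rw [show ((L - 2 - (j.1 + s) : ℕ) : ℤ) = (Mi : ℤ) - ((N + s + 1 : ℕ) : ℤ) by omega]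
      rw [show (Mi : ℤ) - ((Mi : ℤ) - ((N + s + 1 : ℕ) : ℤ)) = ((N + s + 1 : ℕ) : ℤ) by ring]
      rw [zpow_natCast, show N + s + 1 = (N + s) + 1 from rfl, pow_succ]
      ring
    -- (b) splitting of (Q;q)
    have hb : qP Q q N * (∏ l ∈ Ico N Mi, (1 - Q * q ^ l)) = qP Q q Mi :=
      Finset.prod_range_mul_prod_Ico _ hNMi
    -- (c) splitting of the row factor
    have hsplit : (∏ t ∈ Ico 1 (L - j.1), (1 - Q * q ^ ((Mi : ℤ) - t))) *
        (∏ t ∈ Ico (L - j.1) L, (1 - Q * q ^ ((Mi : ℤ) - t))) =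
        ∏ t ∈ Ico 1 L, (1 - Q * q ^ ((Mi : ℤ) - t)) :=
      Finset.prod_Ico_consecutive _ (by omega) (by omega)
    have hc1 : (∏ t ∈ Ico 1 (L - j.1), (1 - Q * q ^ ((Mi : ℤ) - t))) =
        ∏ l ∈ Ico N Mi, (1 - Q * q ^ l) := by
      rw [Finset.prod_Ico_eq_prod_range, Finset.prod_Ico_eq_prod_range]
      rw [show L - j.1 - 1 = Mi - N by omega]
      rw [← Finset.prod_range_reflect (fun s => 1 - Q * q ^ (N + s)) (Mi - N)]
      refine Finset.prod_congr rfl fun s hs => ?_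
      have hs' : s < Mi - N := mem_range.1 hs
      rw [← zpow_natCast q (N + (Mi - N - 1 - s))]
      rw [show ((N + (Mi - N - 1 - s) : ℕ) : ℤ) = (Mi : ℤ) - ((1 + s : ℕ) : ℤ) by omega]
    have hc2 : (∏ t ∈ Ico (L - j.1) L, (1 - Q * q ^ ((Mi : ℤ) - t))) =
        ∏ k ∈ range j.1, (1 - Q * q ^ ((Mi : ℤ) - ((L - 1 - k : ℕ) : ℤ))) := by
      rw [Finset.prod_Ico_eq_prod_range]
      rw [← Finset.prod_range_reflect
        (fun k => 1 - Q * q ^ ((Mi : ℤ) - ((L - 1 - k : ℕ) : ℤ))) j.1]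
      rw [show L - (L - j.1) = j.1 by omega]
      refine Finset.prod_congr rfl fun s hs => ?_
      have hs' : s < j.1 := mem_range.1 hs
      rw [show ((L - 1 - (j.1 - 1 - s) : ℕ) : ℤ) = ((L - j.1 + s : ℕ) : ℤ) by omega]
    have hz : qP q q N ≠ 0 := qPqq_ne_zero hqm N
    rw [hA, ← ha, haP, ← hb, ← hsplit, hc1, hc2]
    field_simp

end SchurAux
namespace SchurAux

open Finset

variable {F : Type*} [Field F]

lemma det_scale_col {n : ℕ} (v : Fin n → F) (A : Fin n → Fin n → F) :
    Matrix.det (Matrix.of fun i j => v i * A i j) = (∏ i, v i) * Matrix.det (Matrix.of A) :=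
  Matrix.det_mul_column v (Matrix.of A)

lemma det_scale_row {n : ℕ} (v : Fin n → F) (A : Fin n → Fin n → F) :
    Matrix.det (Matrix.of fun i j => v j * A i j) = (∏ j, v j) * Matrix.det (Matrix.of A) :=
  Matrix.det_mul_row v (Matrix.of A)

lemma CFQ {q Q : F} (hq : q ≠ 0) (hqm : ∀ m : ℕ, 1 ≤ m → q ^ m ≠ 1) (hQ0 : Q ≠ 0)
    (p : ℕ → ℕ) (L : ℕ) :
    (∏ i : Fin L, (qP q q (mext p L i.1) *
        ∏ t ∈ Ico 1 L, (1 - Q * q ^ ((mext p L i.1 : ℤ) - t)))) * (Ament q Q p L).det =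
      (∏ i : Fin L, qP Q q (mext p L i.1)) *
        ((∏ j : Fin L, ((∏ k ∈ Ico j.1 (L - 1), -(q ^ (-((L - 2 - k : ℕ) : ℤ)))) *
            ∏ k ∈ range j.1, -(Q * q ^ (-((L - 1 - k : ℕ) : ℤ))))) *
          ((∏ k ∈ range (L - 1), ∏ l ∈ range (k + 1),
              (-(Q⁻¹ * q ^ (L - 1 - l)) - -(q ^ (L - 2 - k)))) *
            Matrix.det (Matrix.of fun i j : Fin L =>
              (q ^ mext p L (i : ℕ)) ^ (L - 1 - (j : ℕ))))) := by
  rw [← Matrix.det_mul_column (fun i : Fin L => qP q q (mext p L i.1) *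
      ∏ t ∈ Ico 1 L, (1 - Q * q ^ ((mext p L i.1 : ℤ) - t))) (Ament q Q p L)]
  have h1 : (Matrix.of fun i j : Fin L => (qP q q (mext p L i.1) *
      ∏ t ∈ Ico 1 L, (1 - Q * q ^ ((mext p L i.1 : ℤ) - t))) * Ament q Q p L i j) =
      Matrix.of fun i j : Fin L => qP Q q (mext p L i.1) *
        ((∏ k ∈ Ico j.1 (L - 1), (1 - q ^ ((mext p L i.1 : ℤ) - ((L - 2 - k : ℕ) : ℤ)))) *
          ∏ k ∈ range j.1, (1 - Q * q ^ ((mext p L i.1 : ℤ) - ((L - 1 - k : ℕ) : ℤ)))) := by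
    ext i j; exact entry_key hq hqm p L i j
  rw [h1, det_scale_col (fun i : Fin L => qP Q q (mext p L i.1))]
  congr 1
  have h2 : (Matrix.of fun i j : Fin L =>
      ((∏ k ∈ Ico j.1 (L - 1), (1 - q ^ ((mext p L i.1 : ℤ) - ((L - 2 - k : ℕ) : ℤ)))) *
        ∏ k ∈ range j.1, (1 - Q * q ^ ((mext p L i.1 : ℤ) - ((L - 1 - k : ℕ) : ℤ))))) =
      Matrix.of fun i j : Fin L =>
        ((∏ k ∈ Ico j.1 (L - 1), -(q ^ (-((L - 2 - k : ℕ) : ℤ)))) *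
          ∏ k ∈ range j.1, -(Q * q ^ (-((L - 1 - k : ℕ) : ℤ)))) *
        kM L (fun k => q ^ mext p L k) (fun k => -(q ^ (L - 2 - k)))
          (fun k => -(Q⁻¹ * q ^ (L - 1 - k))) 0 i j := by
    ext i j
    simp only [Matrix.of_apply]
    have hP : (∏ k ∈ Ico j.1 (L - 1), (1 - q ^ ((mext p L i.1 : ℤ) - ((L - 2 - k : ℕ) : ℤ)))) =
        (∏ k ∈ Ico j.1 (L - 1), -(q ^ (-((L - 2 - k : ℕ) : ℤ)))) *
          ∏ k ∈ Ico j.1 (L - 1), (q ^ mext p L i.1 + -(q ^ (L - 2 - k))) := by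
      rw [← Finset.prod_mul_distrib]
      exact Finset.prod_congr rfl fun k _ => helper1 hq (mext p L i.1) (L - 2 - k)
    have hT : (∏ k ∈ range j.1, (1 - Q * q ^ ((mext p L i.1 : ℤ) - ((L - 1 - k : ℕ) : ℤ)))) =
        (∏ k ∈ range j.1, -(Q * q ^ (-((L - 1 - k : ℕ) : ℤ)))) *
          ∏ k ∈ range j.1, (q ^ mext p L i.1 + -(Q⁻¹ * q ^ (L - 1 - k))) := by
      rw [← Finset.prod_mul_distrib]
      exact Finset.prod_congr rfl fun k _ => helper2 hq hQ0 (mext p L i.1) (L - 1 - k)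
    rw [hP, hT]
    show _ = _ * ((∏ k ∈ Ico j.1 (L - 1), (q ^ mext p L i.1 + -(q ^ (L - 2 - k)))) *
      ∏ k ∈ range (j.1 - 0), (q ^ mext p L i.1 + -(Q⁻¹ * q ^ (L - 1 - k))))
    rw [Nat.sub_zero]
    ring
  rw [h2]
  rw [det_scale_row (fun j : Fin L => (∏ k ∈ Ico j.1 (L - 1), -(q ^ (-((L - 2 - k : ℕ) : ℤ)))) *
    ∏ k ∈ range j.1, -(Q * q ^ (-((L - 1 - k : ℕ) : ℤ))))
    (A := fun i j => kM L (fun k => q ^ mext p L k) (fun k => -(q ^ (L - 2 - k)))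
      (fun k => -(Q⁻¹ * q ^ (L - 1 - k))) 0 i j)]
  have hof : (Matrix.of fun i j : Fin L => kM L (fun k => q ^ mext p L k)
      (fun k => -(q ^ (L - 2 - k))) (fun k => -(Q⁻¹ * q ^ (L - 1 - k))) 0 i j) =
      kM L (fun k => q ^ mext p L k) (fun k => -(q ^ (L - 2 - k)))
        (fun k => -(Q⁻¹ * q ^ (L - 1 - k))) 0 := rfl
  rw [hof, kratt L (fun k => q ^ mext p L k) (fun k => -(q ^ (L - 2 - k)))
    (fun k => -(Q⁻¹ * q ^ (L - 1 - k)))]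

lemma CF0 {q : F} (hq : q ≠ 0) (hqm : ∀ m : ℕ, 1 ≤ m → q ^ m ≠ 1)
    (p : ℕ → ℕ) (L : ℕ) :
    (∏ i : Fin L, qP q q (mext p L i.1)) * (Ament q (0 : F) p L).det =
      (∏ j : Fin L, ∏ k ∈ Ico j.1 (L - 1), -(q ^ (-((L - 2 - k : ℕ) : ℤ)))) *
        Matrix.det (Matrix.of fun i j : Fin L =>
          (q ^ mext p L (i : ℕ)) ^ (L - 1 - (j : ℕ))) := by
  rw [← Matrix.det_mul_column (fun i : Fin L => qP q q (mext p L i.1)) (Ament q 0 p L)]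
  have h1 : (Matrix.of fun i j : Fin L => qP q q (mext p L i.1) * Ament q (0 : F) p L i j) =
      Matrix.of fun i j : Fin L =>
        ∏ k ∈ Ico j.1 (L - 1), (1 - q ^ ((mext p L i.1 : ℤ) - ((L - 2 - k : ℕ) : ℤ))) := by
    ext i j
    have h := entry_key (Q := (0 : F)) hq hqm p L i j
    simpa using h
  rw [h1]
  have h2 : (Matrix.of fun i j : Fin L =>
      ∏ k ∈ Ico j.1 (L - 1), (1 - q ^ ((mext p L i.1 : ℤ) - ((L - 2 - k : ℕ) : ℤ)))) =
      Matrix.of fun i j : Fin L =>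
        (∏ k ∈ Ico j.1 (L - 1), -(q ^ (-((L - 2 - k : ℕ) : ℤ)))) *
          ∏ k ∈ Ico j.1 (L - 1), (q ^ mext p L (i : ℕ) + -(q ^ (L - 2 - k))) := by
    ext i j
    simp only [Matrix.of_apply]
    rw [← Finset.prod_mul_distrib]
    exact Finset.prod_congr rfl fun k _ => helper1 hq (mext p L i.1) (L - 2 - k)
  rw [h2]
  rw [det_scale_row (fun j : Fin L => ∏ k ∈ Ico j.1 (L - 1), -(q ^ (-((L - 2 - k : ℕ) : ℤ))))]
  rw [detG L (fun k => q ^ mext p L k) (fun k => -(q ^ (L - 2 - k)))]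

end SchurAux
namespace SchurAux

open Finset

variable {F : Type*} [Field F]

lemma perrow {q Q : F} (p : ℕ → ℕ) (L : ℕ) (i0 : ℕ) (hi0 : i0 < L) :
    qP Q q (mext p L i0) * (∏ s ∈ range i0, (1 - Q * q ^ ((s : ℤ) - (i0 : ℤ)))) =
      (∏ t ∈ Ico 1 L, (1 - Q * q ^ ((mext p L i0 : ℤ) - t))) *
        ∏ j ∈ Icc 1 (p (i0 + 1)), (1 - Q * q ^ ((j : ℤ) - ((i0 + 1 : ℕ) : ℤ))) := by
  set P := p (i0 + 1) with hP
  have hm : (mext p L i0 : ℤ) = (P : ℤ) + (L : ℤ) - 1 - i0 := by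
    simp only [mext, hP]; push_cast; omega
  set f : ℕ → F := fun s => 1 - Q * q ^ ((s : ℤ) - (i0 : ℤ)) with hf
  have h1 : qP Q q (mext p L i0) = ∏ l ∈ range (mext p L i0), f (i0 + l) := by
    refine Finset.prod_congr rfl fun l _ => ?_
    simp only [hf]
    rw [show ((i0 + l : ℕ) : ℤ) - (i0 : ℤ) = ((l : ℕ) : ℤ) by omega, zpow_natCast]
  have hLHS : qP Q q (mext p L i0) * (∏ s ∈ range i0, f s) =
      ∏ s ∈ range (i0 + mext p L i0), f s := by
    rw [Finset.prod_range_add f i0 (mext p L i0), h1]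
    ring
  have h2 : (∏ t ∈ Ico 1 L, (1 - Q * q ^ ((mext p L i0 : ℤ) - t))) =
      ∏ s ∈ range (L - 1), f (P + s) := by
    rw [Finset.prod_Ico_eq_prod_range]
    rw [← Finset.prod_range_reflect (fun s => f (P + s)) (L - 1)]
    refine Finset.prod_congr rfl fun s hs => ?_
    have hs' : s < L - 1 := mem_range.1 hs
    simp only [hf]
    rw [show ((P + (L - 1 - 1 - s) : ℕ) : ℤ) - (i0 : ℤ) =
      (mext p L i0 : ℤ) - ((1 + s : ℕ) : ℤ) by omega]
  have h3 : (∏ j ∈ Icc 1 P, (1 - Q * q ^ ((j : ℤ) - ((i0 + 1 : ℕ) : ℤ)))) =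
      ∏ s ∈ range P, f s := by
    rw [← Finset.Ico_add_one_right_eq_Icc, Finset.prod_Ico_eq_prod_range]
    rw [show P + 1 - 1 = P by omega]
    refine Finset.prod_congr rfl fun s hs => ?_
    simp only [hf]
    rw [show ((1 + s : ℕ) : ℤ) - ((i0 + 1 : ℕ) : ℤ) = (s : ℤ) - (i0 : ℤ) by omega]
  rw [hLHS, h2, h3, mul_comm (∏ s ∈ range (L - 1), f (P + s)) (∏ s ∈ range P, f s),
    ← Finset.prod_range_add f P (L - 1)]
  rw [show i0 + mext p L i0 = P + (L - 1) by simp only [mext, hP]; omega]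

lemma scalar {q Q : F} (hq : q ≠ 0) (hQ0 : Q ≠ 0) (p : ℕ → ℕ) (L : ℕ) :
    (∏ i : Fin L, qP Q q (mext p L i.1)) *
        (∏ j : Fin L, ∏ k ∈ range j.1, -(Q * q ^ (-((L - 1 - k : ℕ) : ℤ)))) *
        (∏ k ∈ range (L - 1), ∏ l ∈ range (k + 1),
          (-(Q⁻¹ * q ^ (L - 1 - l)) - -(q ^ (L - 2 - k)))) =
      (∏ i : Fin L, ∏ t ∈ Ico 1 L, (1 - Q * q ^ ((mext p L i.1 : ℤ) - t))) *
        ∏ i ∈ Icc 1 L, ∏ j ∈ Icc 1 (p i), (1 - Q * q ^ ((j : ℤ) - (i : ℤ))) := by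
  rcases Nat.eq_zero_or_pos L with rfl | hL
  · simp
  obtain ⟨L', rfl⟩ : ∃ L', L = L' + 1 := ⟨L - 1, by omega⟩
  set L := L' + 1 with hLdef
  -- Step 1 : rewrite the (b-a) product
  have hCb : (∏ k ∈ range (L - 1), ∏ l ∈ range (k + 1),
      (-(Q⁻¹ * q ^ (L - 1 - l)) - -(q ^ (L - 2 - k)))) =
      (∏ k ∈ range (L - 1), ∏ l ∈ range (k + 1), -(Q⁻¹ * q ^ (L - 1 - l))) *
        ∏ k ∈ range (L - 1), ∏ l ∈ range (k + 1), (1 - Q * q ^ ((l : ℤ) - k - 1)) := by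
    rw [← Finset.prod_mul_distrib]
    refine Finset.prod_congr rfl fun k hk => ?_
    rw [← Finset.prod_mul_distrib]
    refine Finset.prod_congr rfl fun l hl => ?_
    have hk' : k < L - 1 := mem_range.1 hk
    have hl' : l < k + 1 := mem_range.1 hl
    have he : (q : F) ^ ((L - 2 - k : ℕ)) = q ^ ((L - 1 - l : ℕ)) * q ^ ((l : ℤ) - k - 1) := by
      rw [← zpow_natCast q (L - 1 - l), ← zpow_add₀ hq,
        show ((L - 1 - l : ℕ) : ℤ) + ((l : ℤ) - k - 1) = ((L - 2 - k : ℕ) : ℤ) by omega,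
        zpow_natCast]
    rw [he]
    field_simp
    ring
  -- Step 2 : the Bt product over columns
  have hBt : (∏ j : Fin L, ∏ k ∈ range j.1, -(Q * q ^ (-((L - 1 - k : ℕ) : ℤ)))) =
      ∏ k ∈ range (L - 1), ∏ l ∈ range (k + 1), -(Q * q ^ (-((L - 1 - l : ℕ) : ℤ))) := by
    rw [Fin.prod_univ_eq_prod_range (fun j => ∏ k ∈ range j, -(Q * q ^ (-((L - 1 - k : ℕ) : ℤ)))) L]
    rw [hLdef, Finset.prod_range_succ' (fun j => ∏ k ∈ range j, -(Q * q ^ (-((L - 1 - k : ℕ) : ℤ)))) L']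
    simp only [Finset.range_zero, Finset.prod_empty, mul_one]
    rfl
  -- Step 3 : pairing kills the scalars
  have hpair : (∏ k ∈ range (L - 1), ∏ l ∈ range (k + 1), -(Q * q ^ (-((L - 1 - l : ℕ) : ℤ)))) *
      (∏ k ∈ range (L - 1), ∏ l ∈ range (k + 1), -(Q⁻¹ * q ^ (L - 1 - l))) = 1 := by
    rw [← Finset.prod_mul_distrib]
    rw [Finset.prod_congr rfl fun k _ => (Finset.prod_mul_distrib).symm]
    have : ∀ k ∈ range (L - 1), ∀ l ∈ range (k + 1),
        (-(Q * q ^ (-((L - 1 - l : ℕ) : ℤ)))) * (-(Q⁻¹ * q ^ (L - 1 - l))) = 1 := by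
      intro k _ l _
      have h4 : (q : F) ^ (-((L - 1 - l : ℕ) : ℤ)) * q ^ ((L - 1 - l : ℕ)) = 1 := by
        rw [← zpow_natCast q (L - 1 - l), ← zpow_add₀ hq]
        simp
      have h5 : Q * Q⁻¹ = 1 := mul_inv_cancel₀ hQ0
      calc (-(Q * q ^ (-((L - 1 - l : ℕ) : ℤ)))) * (-(Q⁻¹ * q ^ (L - 1 - l)))
          = (Q * Q⁻¹) * (q ^ (-((L - 1 - l : ℕ) : ℤ)) * q ^ ((L - 1 - l : ℕ))) := by ring
        _ = 1 := by rw [h4, h5, mul_one]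
    rw [Finset.prod_congr rfl fun k hk => Finset.prod_congr rfl (this k hk)]
    simp
  -- Step 4 : the content reorganization
  have hD : (∏ k ∈ range (L - 1), ∏ l ∈ range (k + 1), (1 - Q * q ^ ((l : ℤ) - k - 1))) =
      ∏ i0 ∈ range L, ∏ s ∈ range i0, (1 - Q * q ^ ((s : ℤ) - (i0 : ℤ))) := by
    rw [hLdef, Finset.prod_range_succ'
      (fun i0 => ∏ s ∈ range i0, (1 - Q * q ^ ((s : ℤ) - (i0 : ℤ)))) L']
    simp only [Finset.range_zero, Finset.prod_empty, mul_one]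
    refine Finset.prod_congr rfl fun k hk => Finset.prod_congr rfl fun l hl => ?_
    rw [show (l : ℤ) - ((k + 1 : ℕ) : ℤ) = (l : ℤ) - k - 1 by omega]
  -- assemble
  rw [hCb, hBt, hD]
  have hre : (∏ i : Fin L, qP Q q (mext p L i.1)) *
      ((∏ k ∈ range (L-1), ∏ l ∈ range (k+1), -(Q * q ^ (-((L - 1 - l : ℕ) : ℤ)))) *
       ((∏ k ∈ range (L-1), ∏ l ∈ range (k+1), -(Q⁻¹ * q ^ (L - 1 - l))) *
        (∏ i0 ∈ range L, ∏ s ∈ range i0, (1 - Q * q ^ ((s : ℤ) - (i0 : ℤ)))))) =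
      (∏ i : Fin L, qP Q q (mext p L i.1)) *
        (∏ i0 ∈ range L, ∏ s ∈ range i0, (1 - Q * q ^ ((s : ℤ) - (i0 : ℤ)))) := by
    rw [← mul_assoc ((∏ k ∈ range (L-1), ∏ l ∈ range (k+1), -(Q * q ^ (-((L - 1 - l : ℕ) : ℤ))))),
      hpair, one_mul]
  calc (∏ i : Fin L, qP Q q (mext p L i.1)) *
      (∏ k ∈ range (L-1), ∏ l ∈ range (k+1), -(Q * q ^ (-((L - 1 - l : ℕ) : ℤ)))) *
      ((∏ k ∈ range (L-1), ∏ l ∈ range (k+1), -(Q⁻¹ * q ^ (L - 1 - l))) *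
       (∏ i0 ∈ range L, ∏ s ∈ range i0, (1 - Q * q ^ ((s : ℤ) - (i0 : ℤ))))) =
      (∏ i : Fin L, qP Q q (mext p L i.1)) *
        (∏ i0 ∈ range L, ∏ s ∈ range i0, (1 - Q * q ^ ((s : ℤ) - (i0 : ℤ)))) := by
        rw [← hre]; ring
    _ = ∏ i0 ∈ range L, (qP Q q (mext p L i0) *
        ∏ s ∈ range i0, (1 - Q * q ^ ((s : ℤ) - (i0 : ℤ)))) := by
        rw [Finset.prod_mul_distrib,
          Fin.prod_univ_eq_prod_range (fun i0 => qP Q q (mext p L i0)) L]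
    _ = ∏ i0 ∈ range L, ((∏ t ∈ Ico 1 L, (1 - Q * q ^ ((mext p L i0 : ℤ) - t))) *
        ∏ j ∈ Icc 1 (p (i0 + 1)), (1 - Q * q ^ ((j : ℤ) - ((i0 + 1 : ℕ) : ℤ)))) := by
        refine Finset.prod_congr rfl fun i0 hi0 => perrow p L i0 (mem_range.1 hi0)
    _ = (∏ i : Fin L, ∏ t ∈ Ico 1 L, (1 - Q * q ^ ((mext p L i.1 : ℤ) - t))) *
        ∏ i ∈ Icc 1 L, ∏ j ∈ Icc 1 (p i), (1 - Q * q ^ ((j : ℤ) - (i : ℤ))) := by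
        rw [Finset.prod_mul_distrib]
        congr 1
        · rw [Fin.prod_univ_eq_prod_range
            (fun i0 => ∏ t ∈ Ico 1 L, (1 - Q * q ^ ((mext p L i0 : ℤ) - t))) L]
        · rw [← Finset.Ico_add_one_right_eq_Icc, Finset.prod_Ico_eq_prod_range]
          rw [show L + 1 - 1 = L by omega]
          refine (Finset.prod_congr rfl fun i0 hi0 => ?_).symm
          rw [show 1 + i0 = i0 + 1 by omega]

end SchurAux
namespace SchurAux

open Finset

variable {F : Type*} [Field F]

lemma main_id {q Q : F} (hq : q ≠ 0) (hqm : ∀ m : ℕ, 1 ≤ m → q ^ m ≠ 1) (hQ0 : Q ≠ 0)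
    (hQ : ∀ l : ℤ, 1 - Q * q ^ l ≠ 0) (p : ℕ → ℕ) (L : ℕ) :
    (Ament q Q p L).det = (Ament q (0 : F) p L).det *
      ∏ i ∈ Icc 1 L, ∏ j ∈ Icc 1 (p i), (1 - Q * q ^ ((j : ℤ) - (i : ℤ))) := by
  have h1 := CFQ hq hqm hQ0 p L
  have h2 := CF0 hq hqm p L
  have h3 := scalar hq hQ0 p L
  rw [Finset.prod_mul_distrib] at h1
  have hsplit : (∏ j : Fin L, ((∏ k ∈ Ico j.1 (L - 1), -(q ^ (-((L - 2 - k : ℕ) : ℤ)))) *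
      ∏ k ∈ range j.1, -(Q * q ^ (-((L - 1 - k : ℕ) : ℤ))))) =
      (∏ j : Fin L, ∏ k ∈ Ico j.1 (L - 1), -(q ^ (-((L - 2 - k : ℕ) : ℤ)))) *
        ∏ j : Fin L, ∏ k ∈ range j.1, -(Q * q ^ (-((L - 1 - k : ℕ) : ℤ))) :=
    Finset.prod_mul_distrib
  rw [hsplit] at h1
  set A := ∏ i : Fin L, qP q q (mext p L i.1) with hA
  set R := ∏ i : Fin L, ∏ t ∈ Ico 1 L, (1 - Q * q ^ ((mext p L i.1 : ℤ) - t)) with hR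
  set B := ∏ i : Fin L, qP Q q (mext p L i.1) with hB
  set Zt := ∏ j : Fin L, ∏ k ∈ Ico j.1 (L - 1), -(q ^ (-((L - 2 - k : ℕ) : ℤ))) with hZt
  set Bt := ∏ j : Fin L, ∏ k ∈ range j.1, -(Q * q ^ (-((L - 1 - k : ℕ) : ℤ))) with hBt
  set Cb := ∏ k ∈ range (L - 1), ∏ l ∈ range (k + 1),
    (-(Q⁻¹ * q ^ (L - 1 - l)) - -(q ^ (L - 2 - k))) with hCb
  set V := Matrix.det (Matrix.of fun i j : Fin L =>
    (q ^ mext p L (i : ℕ)) ^ (L - 1 - (j : ℕ))) with hV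
  set K := ∏ i ∈ Icc 1 L, ∏ j ∈ Icc 1 (p i), (1 - Q * q ^ ((j : ℤ) - (i : ℤ))) with hK
  -- h1 : (A * R) * detQ = B * ((Zt * Bt) * (Cb * V))
  -- h2 : A * det0 = Zt * V
  -- h3 : B * Bt * Cb = R * K
  have hAne : A ≠ 0 := Finset.prod_ne_zero_iff.2 fun i _ => qPqq_ne_zero hqm _
  have hRne : R ≠ 0 := Finset.prod_ne_zero_iff.2 fun i _ =>
    Finset.prod_ne_zero_iff.2 fun t _ => hQ _
  refine mul_left_cancel₀ (mul_ne_zero hAne hRne) ?_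
  calc (A * R) * (Ament q Q p L).det = B * ((Zt * Bt) * (Cb * V)) := h1
    _ = (Zt * V) * (B * Bt * Cb) := by ring
    _ = (A * (Ament q (0 : F) p L).det) * (R * K) := by rw [h2, h3]
    _ = A * R * ((Ament q (0 : F) p L).det * K) := by ring

lemma vdw_ne_zero {q : F} (hq : q ≠ 0) (hqm : ∀ m : ℕ, 1 ≤ m → q ^ m ≠ 1)
    (p : ℕ → ℕ) (L : ℕ) (hmono : ∀ i j, 1 ≤ i → i ≤ j → p j ≤ p i) :
    Matrix.det (Matrix.of fun i j : Fin L =>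
      (q ^ mext p L (i : ℕ)) ^ (L - 1 - (j : ℕ))) ≠ 0 := by
  set v : Fin L → F := fun i => q ^ mext p L i.1 with hv
  have hM : (Matrix.of fun i j : Fin L => (q ^ mext p L (i : ℕ)) ^ (L - 1 - (j : ℕ))) =
      (Matrix.vandermonde v).submatrix id Fin.revPerm := by
    ext i j
    simp only [Matrix.submatrix_apply, Matrix.vandermonde_apply, Matrix.of_apply, id_eq, hv]
    congr 1
    have : (Fin.revPerm j : Fin L).val = L - 1 - j.1 := by
      simp [Fin.revPerm, Fin.val_rev]
      omega
    rw [this]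
  rw [hM, Matrix.det_permute', Matrix.det_vandermonde]
  apply mul_ne_zero
  · rcases Int.units_eq_one_or (Equiv.Perm.sign (Fin.revPerm : Equiv.Perm (Fin L))) with h | h <;>
      simp [h]
  · refine Finset.prod_ne_zero_iff.2 fun i _ => Finset.prod_ne_zero_iff.2 fun j hj => ?_
    have hij : i < j := mem_Ioi.1 hj
    refine sub_ne_zero.2 fun he => ?_
    have hmm : mext p L j.1 < mext p L i.1 := by
      have h1 : p (j.1 + 1) ≤ p (i.1 + 1) := hmono (i.1 + 1) (j.1 + 1) (by omega)
        (by have : i.1 < j.1 := hij; omega)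
      have h2 : (i.1 : ℕ) < j.1 := hij
      have hjL : j.1 < L := j.2
      simp only [mext]; omega
    set a := mext p L i.1 with ha
    set b := mext p L j.1 with hb
    have hcalc : q ^ b * q ^ (a - b) = q ^ b * 1 := by
      rw [← pow_add, show b + (a - b) = a by omega, mul_one]
      exact he.symm
    have h2 : q ^ (a - b) = 1 := mul_left_cancel₀ (pow_ne_zero b hq) hcalc
    exact hqm (a - b) (by omega) h2

end SchurAux
namespace SchurAux

open Finset Polynomial

lemma Ament_map {F G : Type*} [Field F] [Field G] (f : F →+* G) (q Q : F)
    (p : ℕ → ℕ) (L : ℕ) :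
    (Ament q Q p L).map f = Ament (f q) (f Q) p L := by
  ext i j
  simp only [Ament, Matrix.map_apply, Matrix.of_apply]
  split_ifs with h
  · exact map_zero f
  · rw [map_mul, map_inv₀, ← qP_map, ← qP_map]

/-- the polynomial-entry matrix, with `Q` replaced by the variable -/
noncomputable def Pm (q : ℂ) (p : ℕ → ℕ) (L : ℕ) : Matrix (Fin L) (Fin L) (Polynomial ℂ) :=
  Matrix.of fun i j =>
    if ((p (i.1 + 1) : ℤ) + j.1 - i.1) < 0 then 0
    else Polynomial.C ((qP q q ((p (i.1 + 1) : ℤ) + j.1 - i.1).toNat)⁻¹) *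
      ∏ l ∈ range ((p (i.1 + 1) : ℤ) + j.1 - i.1).toNat,
        (1 - Polynomial.X * Polynomial.C (q ^ l))

lemma transfer (q Q : ℂ) (hq : q ≠ 0) (hqm : ∀ m : ℕ, 1 ≤ m → q ^ m ≠ 1)
    (p : ℕ → ℕ) (L : ℕ) :
    (Ament q Q p L).det = (Ament q (0 : ℂ) p L).det *
      ∏ i ∈ Icc 1 L, ∏ j ∈ Icc 1 (p i), (1 - Q * q ^ ((j : ℤ) - (i : ℤ))) := by
  set φ : Polynomial ℂ →+* RatFunc ℂ := (algebraMap (Polynomial ℂ) (RatFunc ℂ)) with hφ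
  have hinj : Function.Injective φ := RatFunc.algebraMap_injective ℂ
  have hCinj : Function.Injective (RatFunc.C : ℂ →+* RatFunc ℂ) :=
    (RatFunc.C : ℂ →+* RatFunc ℂ).injective
  have hq' : (RatFunc.C q : RatFunc ℂ) ≠ 0 := fun h =>
    hq (hCinj (h.trans (map_zero _).symm))
  have hqm' : ∀ m : ℕ, 1 ≤ m → (RatFunc.C q : RatFunc ℂ) ^ m ≠ 1 := by
    intro m hm h
    refine hqm m hm (hCinj ?_)
    rw [← map_pow] at h
    rw [h, map_one]
  have hQ0' : (RatFunc.X : RatFunc ℂ) ≠ 0 := RatFunc.X_ne_zero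
  have hzp : ∀ l : ℤ, (RatFunc.C q : RatFunc ℂ) ^ l = RatFunc.C (q ^ l) := fun l =>
    (map_zpow₀ (RatFunc.C : ℂ →+* RatFunc ℂ) q l).symm
  have hQ' : ∀ l : ℤ, (1 : RatFunc ℂ) - RatFunc.X * (RatFunc.C q) ^ l ≠ 0 := by
    intro l h
    rw [sub_eq_zero, hzp l] at h
    have h2 : φ (Polynomial.X * Polynomial.C (q ^ l)) = φ 1 := by
      rw [map_mul, map_one, RatFunc.algebraMap_X, RatFunc.algebraMap_C]
      exact h.symm
    have h3 := hinj h2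
    have h4 := congrArg (Polynomial.eval 0) h3
    simp at h4
  have hmainK := main_id (F := RatFunc ℂ) hq' hqm' hQ0' hQ' p L
  -- identify the LHS
  have hPmmap : (Pm q p L).map φ = Ament (RatFunc.C q) RatFunc.X p L := by
    ext i j
    simp only [Pm, Ament, Matrix.map_apply, Matrix.of_apply]
    split_ifs with h
    · exact map_zero φ
    · rw [map_mul, map_prod, RatFunc.algebraMap_C,
        qP_map (RatFunc.C : ℂ →+* RatFunc ℂ) q q, ← map_inv₀]
      congr 1
      rw [qP]
      refine Finset.prod_congr rfl fun l _ => ?_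
      rw [map_sub, map_one, map_mul, RatFunc.algebraMap_X, RatFunc.algebraMap_C, map_pow]
  have hdetPm : φ (Pm q p L).det = (Ament (RatFunc.C q) RatFunc.X p L).det := by
    rw [RingHom.map_det, RingHom.mapMatrix_apply, hPmmap]
  -- identify the Q = 0 determinant
  have hA0 : (Ament (RatFunc.C q) (0 : RatFunc ℂ) p L).det =
      RatFunc.C ((Ament q (0 : ℂ) p L).det) := by
    rw [RingHom.map_det, RingHom.mapMatrix_apply, Ament_map, map_zero]
  -- identify the content product
  have hK : (∏ i ∈ Icc 1 L, ∏ j ∈ Icc 1 (p i),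
        ((1 : RatFunc ℂ) - RatFunc.X * (RatFunc.C q) ^ ((j : ℤ) - (i : ℤ)))) =
      φ (∏ i ∈ Icc 1 L, ∏ j ∈ Icc 1 (p i),
        ((1 : Polynomial ℂ) - Polynomial.X * Polynomial.C (q ^ ((j : ℤ) - (i : ℤ))))) := by
    rw [map_prod]
    refine Finset.prod_congr rfl fun i _ => ?_
    rw [map_prod]
    refine Finset.prod_congr rfl fun j _ => ?_
    rw [map_sub, map_one, map_mul, RatFunc.algebraMap_X, RatFunc.algebraMap_C, hzp]
  -- polynomial identity
  have hpoly : (Pm q p L).det = Polynomial.C ((Ament q (0 : ℂ) p L).det) *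
      ∏ i ∈ Icc 1 L, ∏ j ∈ Icc 1 (p i),
        ((1 : Polynomial ℂ) - Polynomial.X * Polynomial.C (q ^ ((j : ℤ) - (i : ℤ)))) := by
    apply hinj
    rw [hdetPm, hmainK, hA0, hK, map_mul, RatFunc.algebraMap_C]
  -- evaluate at Q
  have hev := congrArg (Polynomial.eval Q) hpoly
  rw [Polynomial.eval_mul, Polynomial.eval_C] at hev
  have hevPm : Polynomial.eval Q (Pm q p L).det = (Ament q Q p L).det := by
    rw [show Polynomial.eval Q (Pm q p L).det = (Polynomial.evalRingHom Q) (Pm q p L).det from rfl,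
      RingHom.map_det, RingHom.mapMatrix_apply]
    congr 1
    ext i j
    simp only [Pm, Ament, Matrix.map_apply, Matrix.of_apply]
    split_ifs with h
    · simp
    · rw [map_mul, coe_evalRingHom, Polynomial.eval_C, Polynomial.eval_prod]
      congr 1
      rw [qP]
      refine Finset.prod_congr rfl fun l _ => ?_
      rw [Polynomial.eval_sub, Polynomial.eval_one, Polynomial.eval_mul, Polynomial.eval_X,
        Polynomial.eval_C]
  have hevK : Polynomial.eval Q (∏ i ∈ Icc 1 L, ∏ j ∈ Icc 1 (p i),
      ((1 : Polynomial ℂ) - Polynomial.X * Polynomial.C (q ^ ((j : ℤ) - (i : ℤ))))) =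
      ∏ i ∈ Icc 1 L, ∏ j ∈ Icc 1 (p i), (1 - Q * q ^ ((j : ℤ) - (i : ℤ))) := by
    rw [Polynomial.eval_prod]
    refine Finset.prod_congr rfl fun i _ => ?_
    rw [Polynomial.eval_prod]
    refine Finset.prod_congr rfl fun j _ => ?_
    rw [Polynomial.eval_sub, Polynomial.eval_one, Polynomial.eval_mul, Polynomial.eval_X,
      Polynomial.eval_C]
  rw [hevPm, hevK] at hev
  exact hev

end SchurAux


open Finset in
/-- For any partition `λ` (at most `L` parts) and parameters `q, a` (with `Q = q^a`),
the ratio `s_λ(t(a,q)) / s_λ(t(∞,q))` equals the q-content product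
`(q^a;q)_λ = ∏_{(i,j)∈λ} (1 - q^{a+j-i})`.  Here `h_k(t(a,q)) = (q^a;q)_k/(q;q)_k`
and `h_k(t(∞,q)) = 1/(q;q)_k`. -/
theorem schur_ratio_q_content_product (p : ℕ → ℕ) (L : ℕ)
    (hmono : ∀ i j, 1 ≤ i → i ≤ j → p j ≤ p i) (hL : ∀ i, L < i → p i = 0)
    (q Q : ℂ) (hq : q ≠ 0) (hqm : ∀ m : ℕ, 1 ≤ m → q ^ m ≠ 1) :
    schurDet (fun k => qPoch Q q k / qPoch q q k) p L /
      schurDet (fun k => (qPoch q q k)⁻¹) p L =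
      ∏ i ∈ Icc 1 L, ∏ j ∈ Icc 1 (p i), (1 - Q * q ^ ((j : ℤ) - (i : ℤ))) := by
  have hqp : ∀ (b : ℂ) (n : ℕ), qPoch b q n = SchurAux.qP b q n := fun b n => rfl
  have hnum : schurDet (fun k => qPoch Q q k / qPoch q q k) p L =
      (SchurAux.Ament q Q p L).det := by
    unfold schurDet SchurAux.Ament
    congr 1
    ext i j
    simp only [Matrix.of_apply]
    split_ifs with h
    · rfl
    · rw [hqp, hqp, div_eq_mul_inv, mul_comm]
  have hden : schurDet (fun k => (qPoch q q k)⁻¹) p L =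
      (SchurAux.Ament q (0 : ℂ) p L).det := by
    unfold schurDet SchurAux.Ament
    congr 1
    ext i j
    simp only [Matrix.of_apply]
    split_ifs with h
    · rfl
    · rw [hqp, SchurAux.qP_zero_left, mul_one]
  have h2 := SchurAux.CF0 hq hqm p L
  have hZt : (∏ j : Fin L, ∏ k ∈ Finset.Ico j.1 (L - 1), -(q ^ (-((L - 2 - k : ℕ) : ℤ)))) ≠ 0 :=
    Finset.prod_ne_zero_iff.2 fun j _ => Finset.prod_ne_zero_iff.2 fun k _ =>
      neg_ne_zero.2 (zpow_ne_zero _ hq)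
  have hV := SchurAux.vdw_ne_zero hq hqm p L hmono
  have hd0 : (SchurAux.Ament q (0 : ℂ) p L).det ≠ 0 := by
    intro h0
    rw [h0, mul_zero] at h2
    exact (mul_ne_zero hZt hV) h2.symm
  rw [hnum, hden, SchurAux.transfer q Q hq hqm p L,
    mul_comm ((SchurAux.Ament q (0 : ℂ) p L).det), mul_div_assoc, div_self hd0, mul_one]
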